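/- Let p be a prime, s ≥ 1 a natural number, k a natural number, and n₁, …, n_s natural numbers with k ≤ n_i for every i. Then, in ℚ_p, the sequence N ↦ (1/p^N) · ∑_{x=0}^{p^N − 1} ∏_{i=1}^{s} B_{k,n_i}(x) tends (as N → ∞) to the rational number (∏_{i=1}^{s} C(n_i, k)) · ∑_{l=0}^{n₁+⋯+n_s − s·k} C(n₁+⋯+n_s − s·k, l) (−1)^l B_{s·k+l}, cast into ℚ_p. (Equivalently, ∫_{ℤ_p} B_{k,n₁}(x) B_{k,n₂}(x) ⋯ B_{k,n_s}(x) dμ₁(x) = C(n₁,k)⋯C(n_s,k) ∑_{l=0}^{n₁+⋯+n_s−sk} C(n₁+⋯+n_s−sk, l)(−1)^l B_{sk+l}.) -/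

import Mathlib

open Finset Filter

private lemma rat_volkenborn_id (p m N : ℕ) (hp : (p : ℚ) ≠ 0) :
    (1 / (p : ℚ) ^ N) * ∑ x ∈ range (p ^ N), (x : ℚ) ^ m
      = bernoulli m + ∑ i ∈ range m,
          (bernoulli i * ((m + 1).choose i) / (m + 1)) * ((p : ℚ) ^ (m - i)) ^ N := by
  have hpow : ((p ^ N : ℕ) : ℚ) = (p : ℚ) ^ N := by push_cast; ring
  rw [_root_.sum_range_pow, hpow, Finset.sum_range_succ]
  have hpn : (p : ℚ) ^ N ≠ 0 := pow_ne_zero _ hp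
  have hm1 : ((m : ℚ) + 1) ≠ 0 := by positivity
  rw [mul_add]
  have hlast : (1 / (p : ℚ) ^ N) *
      (bernoulli m * ((m + 1).choose m) * ((p:ℚ) ^ N) ^ (m + 1 - m) / (m + 1)) = bernoulli m := by
    have h : m + 1 - m = 1 := by omega
    rw [h, Nat.choose_succ_self_right]
    field_simp
    push_cast
    ring
  rw [hlast, Finset.mul_sum, add_comm]
  congr 1
  apply Finset.sum_congr rfl
  intro i hi
  have hi' : i < m := Finset.mem_range.mp hi
  have h1 : m + 1 - i = (m - i - 1) + 1 + 1 := by omega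
  have h2 : m - i = (m - i - 1) + 1 := by omega
  rw [h1, ← pow_mul, ← pow_mul, h2]
  field_simp
  ring_nf
  rw [show 1 + (m - i - 1) - 1 = m - i - 1 by omega]

private lemma volkenborn_monomial (p : ℕ) [Fact p.Prime] (m : ℕ) :
    Tendsto (fun N : ℕ => (1 / (p : ℚ_[p]) ^ N) * ∑ x ∈ range (p ^ N), (x : ℚ_[p]) ^ m)
      atTop (nhds ((bernoulli m : ℚ) : ℚ_[p])) := by
  have hp : (p : ℚ) ≠ 0 := Nat.cast_ne_zero.mpr (Fact.out (p := p.Prime)).ne_zero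
  have heq : ∀ N : ℕ, (1 / (p : ℚ_[p]) ^ N) * ∑ x ∈ range (p ^ N), (x : ℚ_[p]) ^ m
      = ((bernoulli m : ℚ) : ℚ_[p]) + ∑ i ∈ range m,
          (((bernoulli i * ((m + 1).choose i) / (m + 1) : ℚ)) : ℚ_[p])
            * (((p : ℚ_[p]) ^ (m - i)) ^ N) := by
    intro N
    have h := rat_volkenborn_id p m N hp
    have hcast := congrArg (fun q : ℚ => (q : ℚ_[p])) h
    simpa [Rat.cast_sum, Rat.cast_mul, Rat.cast_pow, Rat.cast_add] using hcast
  simp only [heq]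
  have h0 : Tendsto (fun N : ℕ => ∑ i ∈ range m,
      (((bernoulli i * ((m + 1).choose i) / (m + 1) : ℚ)) : ℚ_[p])
        * (((p : ℚ_[p]) ^ (m - i)) ^ N)) atTop (nhds 0) := by
    have hz : (0 : ℚ_[p]) = ∑ i ∈ range m,
        (((bernoulli i * ((m + 1).choose i) / (m + 1) : ℚ)) : ℚ_[p]) * 0 := by simp
    rw [hz]
    apply tendsto_finset_sum
    intro i hi
    apply Tendsto.const_mul
    apply tendsto_pow_atTop_nhds_zero_of_norm_lt_one
    have hmi : m - i ≠ 0 := by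
      have := Finset.mem_range.mp hi; omega
    have hnorm : ‖(p : ℚ_[p])‖ < 1 := by
      rw [Padic.norm_p]
      have hp1 : 1 < p := (Fact.out (p := p.Prime)).one_lt
      rw [inv_lt_one_iff₀]
      right
      exact_mod_cast hp1
    calc ‖(p : ℚ_[p]) ^ (m - i)‖ = ‖(p : ℚ_[p])‖ ^ (m - i) := norm_pow _ _
      _ ≤ ‖(p : ℚ_[p])‖ := pow_le_of_le_one (norm_nonneg _) hnorm.le hmi
      _ < 1 := hnorm
  simpa using (tendsto_const_nhds (x := ((bernoulli m : ℚ) : ℚ_[p]))).add h0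

/-- `∫_{ℤ_p} B_{k,n₁}(x) ⋯ B_{k,n_s}(x) dμ₁(x)
    = C(n₁,k)⋯C(n_s,k) ∑_{l=0}^{n₁+⋯+n_s−sk} C(n₁+⋯+n_s−sk,l)(−1)^l B_{sk+l}`. -/
theorem volkenborn_bernstein_prod (p : ℕ) [Fact p.Prime] (s : ℕ) (hs : 1 ≤ s) (k : ℕ)
    (n : Fin s → ℕ) (hk : ∀ i, k ≤ n i) :
    Filter.Tendsto
      (fun N : ℕ => (1 / (p : ℚ_[p]) ^ N) *
        ∑ x ∈ Finset.range (p ^ N), ∏ i : Fin s,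
          ((n i).choose k : ℚ_[p]) * (x : ℚ_[p]) ^ k * (1 - (x : ℚ_[p])) ^ (n i - k))
      Filter.atTop
      (nhds (((∏ i : Fin s, ((n i).choose k : ℚ)) *
        ∑ l ∈ Finset.range ((∑ i : Fin s, n i) - s * k + 1),
          (((∑ i : Fin s, n i) - s * k).choose l : ℚ) * (-1 : ℚ) ^ l *
            bernoulli (s * k + l) : ℚ) : ℚ_[p])) := by
  set M : ℕ := (∑ i : Fin s, n i) - s * k with hM
  have hMsum : ∑ i : Fin s, (n i - k) = M := by
    have h1 : (∑ i : Fin s, (n i - k)) + s * k = ∑ i : Fin s, n i := by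
      have h2 : s * k = ∑ _i : Fin s, k := by simp [mul_comm]
      rw [h2, ← Finset.sum_add_distrib]
      exact Finset.sum_congr rfl fun i _ => by have := hk i; omega
    omega
  set C : ℚ_[p] := ∏ i : Fin s, ((n i).choose k : ℚ_[p]) with hC
  have hterm : ∀ x : ℕ, (∏ i : Fin s,
      ((n i).choose k : ℚ_[p]) * (x : ℚ_[p]) ^ k * (1 - (x : ℚ_[p])) ^ (n i - k))
      = C * ∑ l ∈ range (M + 1),
          ((M.choose l : ℚ_[p]) * (-1 : ℚ_[p]) ^ l * (x : ℚ_[p]) ^ (s * k + l)) := by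
    intro x
    rw [Finset.prod_mul_distrib, Finset.prod_mul_distrib]
    rw [Finset.prod_const, Finset.prod_pow_eq_pow_sum, hMsum]
    have hcard : (Finset.univ : Finset (Fin s)).card = s := by simp
    rw [hcard]
    have hbin : (1 - (x : ℚ_[p])) ^ M
        = ∑ l ∈ range (M + 1), (-(x:ℚ_[p])) ^ l * 1 ^ (M - l) * (M.choose l) := by
      rw [← add_pow]
      ring_nf
    rw [hbin, Finset.mul_sum, Finset.mul_sum]
    apply Finset.sum_congr rfl
    intro l hl
    rw [pow_add, neg_pow, one_pow]
    ring
  have hseq : ∀ N : ℕ, (1 / (p : ℚ_[p]) ^ N) *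
      ∑ x ∈ Finset.range (p ^ N), ∏ i : Fin s,
        ((n i).choose k : ℚ_[p]) * (x : ℚ_[p]) ^ k * (1 - (x : ℚ_[p])) ^ (n i - k)
      = C * ∑ l ∈ range (M + 1), (M.choose l : ℚ_[p]) * (-1 : ℚ_[p]) ^ l *
          ((1 / (p : ℚ_[p]) ^ N) * ∑ x ∈ range (p ^ N), (x : ℚ_[p]) ^ (s * k + l)) := by
    intro N
    simp only [hterm, Finset.mul_sum]
    rw [Finset.sum_comm]
    apply Finset.sum_congr rfl
    intro l _
    apply Finset.sum_congr rfl
    intro x _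
    ring
  have hlim : Tendsto (fun N : ℕ => C * ∑ l ∈ range (M + 1),
      (M.choose l : ℚ_[p]) * (-1 : ℚ_[p]) ^ l *
      ((1 / (p : ℚ_[p]) ^ N) * ∑ x ∈ range (p ^ N), (x : ℚ_[p]) ^ (s * k + l)))
      atTop (nhds (C * ∑ l ∈ range (M + 1), (M.choose l : ℚ_[p]) * (-1 : ℚ_[p]) ^ l *
        ((bernoulli (s * k + l) : ℚ) : ℚ_[p]))) := by
    apply Tendsto.const_mul
    apply tendsto_finset_sum
    intro l _
    exact (volkenborn_monomial p (s * k + l)).const_mul _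
  have hval : (((∏ i : Fin s, ((n i).choose k : ℚ)) *
        ∑ l ∈ Finset.range (M + 1),
          ((M.choose l : ℚ) * (-1 : ℚ) ^ l * bernoulli (s * k + l)) : ℚ) : ℚ_[p])
      = C * ∑ l ∈ range (M + 1), (M.choose l : ℚ_[p]) * (-1 : ℚ_[p]) ^ l *
          ((bernoulli (s * k + l) : ℚ) : ℚ_[p]) := by
    push_cast
    rw [hC]
  rw [hval]
  exact hlim.congr fun N => (hseq N).symm
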